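/- Let S = {(0,1),(0,2),(1,1),(1,2),(2,2),(3,0),(3,1),(3,2),(3,3)}. The mesh patterns q1 = (123, S) and q2 = (132, S) are jointly equidistributed. -/

import Mathlib

/-- The boundary-extended sequence of positions of a candidate occurrence:
`posExt i 0 = 0`, `posExt i a = i (a-1) + 1` (1-based position) for `1 ≤ a ≤ m`,
and `posExt i (m+1) = n + 1`. -/
def posExt {m n : ℕ} (i : Fin m → Fin n) : ℕ → ℕ := fun a =>
  if h : 1 ≤ a ∧ a ≤ m then ((i ⟨a - 1, by omega⟩ : Fin n) : ℕ) + 1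
  else if a = 0 then 0 else n + 1

/-- The boundary-extended increasing rearrangement of the values of a candidate
occurrence: `valExt τ π i 0 = 0`, `valExt τ π i b = π (i (τ⁻¹ (b-1))) + 1`
(the `b`-th smallest value, 1-based) for `1 ≤ b ≤ m`, and `valExt τ π i (m+1) = n + 1`. -/
def valExt {m n : ℕ} (τ : Equiv.Perm (Fin m)) (π : Equiv.Perm (Fin n))
    (i : Fin m → Fin n) : ℕ → ℕ := fun b =>
  if h : 1 ≤ b ∧ b ≤ m then ((π (i (τ.symm ⟨b - 1, by omega⟩)) : Fin n) : ℕ) + 1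
  else if b = 0 then 0 else n + 1

/-- `i : Fin m → Fin n` is an occurrence of the mesh pattern `(τ, R)` in the
permutation `π` of `{1, …, n}` (positions and values are taken 1-based via `+1`). -/
def IsMeshOcc {m n : ℕ} (τ : Equiv.Perm (Fin m)) (R : Set (ℕ × ℕ))
    (π : Equiv.Perm (Fin n)) (i : Fin m → Fin n) : Prop :=
  StrictMono i ∧
  (∀ a b : Fin m, π (i a) < π (i b) ↔ τ a < τ b) ∧
  ∀ a b : ℕ, (a, b) ∈ R →
    ¬ ∃ j : Fin n,
        posExt i a < (j : ℕ) + 1 ∧ (j : ℕ) + 1 < posExt i (a + 1) ∧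
        valExt τ π i b < ((π j : Fin n) : ℕ) + 1 ∧
        ((π j : Fin n) : ℕ) + 1 < valExt τ π i (b + 1)

/-- The number of occurrences of the mesh pattern `(τ, R)` in `π`. -/
noncomputable def occ {m n : ℕ} (τ : Equiv.Perm (Fin m)) (R : Set (ℕ × ℕ))
    (π : Equiv.Perm (Fin n)) : ℕ :=
  Nat.card {i : Fin m → Fin n // IsMeshOcc τ R π i}

/-- Mesh patterns `(τ₁, R₁)` and `(τ₂, R₂)` are jointly equidistributed. -/
def JointlyEquidistributed {m₁ m₂ : ℕ} (τ₁ : Equiv.Perm (Fin m₁)) (R₁ : Set (ℕ × ℕ))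
    (τ₂ : Equiv.Perm (Fin m₂)) (R₂ : Set (ℕ × ℕ)) : Prop :=
  ∀ n k ℓ : ℕ,
    Nat.card {π : Equiv.Perm (Fin n) // occ τ₁ R₁ π = k ∧ occ τ₂ R₂ π = ℓ} =
    Nat.card {π : Equiv.Perm (Fin n) // occ τ₁ R₁ π = ℓ ∧ occ τ₂ R₂ π = k}

/-- The pattern 123 (identity on three letters). -/
def perm123 : Equiv.Perm (Fin 3) := 1

/-- The pattern 132 (0-indexed: `0 ↦ 0`, `1 ↦ 2`, `2 ↦ 1`). -/
def perm132 : Equiv.Perm (Fin 3) := Equiv.swap 1 2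

/-- The pattern 12 (identity on two letters). -/
def perm12 : Equiv.Perm (Fin 2) := 1

/-- The pattern 21. -/
def perm21 : Equiv.Perm (Fin 2) := Equiv.swap 0 1

/-- The unsigned Stirling numbers of the first kind. -/
def stirlingFirst : ℕ → ℕ → ℕ
  | 0, 0 => 1
  | 0, _ + 1 => 0
  | _ + 1, 0 => 0
  | n + 1, k + 1 => n * stirlingFirst n (k + 1) + stirlingFirst n k

def S18 : Set (ℕ × ℕ) :=
  {(0, 1), (0, 2), (1, 1), (1, 2), (2, 2), (3, 0), (3, 1), (3, 2), (3, 3)}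

def P1 {n : ℕ} (π : Equiv.Perm (Fin n)) : Prop :=
  ∃ j k l : Fin n, (l : ℕ) + 1 = n ∧ (π k : ℕ) + 1 = (π l : ℕ) ∧
    (j : ℕ) < (k : ℕ) ∧ (π j : ℕ) < (π k : ℕ)

def P2 {n : ℕ} (π : Equiv.Perm (Fin n)) : Prop :=
  ∃ j k l : Fin n, (l : ℕ) + 1 = n ∧ (π k : ℕ) = (π l : ℕ) + 1 ∧
    (j : ℕ) < (k : ℕ) ∧ (π j : ℕ) < (π l : ℕ)

variable {n : ℕ}

lemma posExt_zero (i : Fin 3 → Fin n) : posExt i 0 = 0 := by simp [posExt]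
lemma posExt_one (i : Fin 3 → Fin n) : posExt i 1 = (i 0 : ℕ) + 1 := by simp [posExt]
lemma posExt_two (i : Fin 3 → Fin n) : posExt i 2 = (i 1 : ℕ) + 1 := by simp [posExt]
lemma posExt_three (i : Fin 3 → Fin n) : posExt i 3 = (i 2 : ℕ) + 1 := by simp [posExt]
lemma posExt_four (i : Fin 3 → Fin n) : posExt i 4 = n + 1 := by simp [posExt]

lemma valExt_zero (τ : Equiv.Perm (Fin 3)) (π : Equiv.Perm (Fin n)) (i : Fin 3 → Fin n) :
    valExt τ π i 0 = 0 := by simp [valExt]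
lemma valExt_four (τ : Equiv.Perm (Fin 3)) (π : Equiv.Perm (Fin n)) (i : Fin 3 → Fin n) :
    valExt τ π i 4 = n + 1 := by simp [valExt]
lemma valExt1_one (π : Equiv.Perm (Fin n)) (i : Fin 3 → Fin n) :
    valExt perm123 π i 1 = (π (i 0) : ℕ) + 1 := by simp [valExt, perm123, Equiv.Perm.one_symm]
lemma valExt1_two (π : Equiv.Perm (Fin n)) (i : Fin 3 → Fin n) :
    valExt perm123 π i 2 = (π (i 1) : ℕ) + 1 := by simp [valExt, perm123, Equiv.Perm.one_symm]
lemma valExt1_three (π : Equiv.Perm (Fin n)) (i : Fin 3 → Fin n) :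
    valExt perm123 π i 3 = (π (i 2) : ℕ) + 1 := by simp [valExt, perm123, Equiv.Perm.one_symm]
lemma valExt2_one (π : Equiv.Perm (Fin n)) (i : Fin 3 → Fin n) :
    valExt perm132 π i 1 = (π (i 0) : ℕ) + 1 := by
  simp [valExt, perm132, Equiv.swap_apply_def]
lemma valExt2_two (π : Equiv.Perm (Fin n)) (i : Fin 3 → Fin n) :
    valExt perm132 π i 2 = (π (i 2) : ℕ) + 1 := by
  simp [valExt, perm132, Equiv.swap_apply_def]
lemma valExt2_three (π : Equiv.Perm (Fin n)) (i : Fin 3 → Fin n) :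
    valExt perm132 π i 3 = (π (i 1) : ℕ) + 1 := by
  simp [valExt, perm132, Equiv.swap_apply_def]

lemma occ1_forward (π : Equiv.Perm (Fin n)) (i : Fin 3 → Fin n)
    (h : IsMeshOcc perm123 S18 π i) :
    (i 2 : ℕ) + 1 = n ∧ (π (i 1) : ℕ) + 1 = (π (i 2) : ℕ) ∧ (i 0 : ℕ) < (i 1 : ℕ) ∧
    (π (i 0) : ℕ) < (π (i 1) : ℕ) ∧
    ∀ j : Fin n, (j : ℕ) < (i 1 : ℕ) → (π j : ℕ) < (π (i 2) : ℕ) →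
      (π j : ℕ) ≤ (π (i 0) : ℕ) := by
  obtain ⟨hmono, hord, hM⟩ := h
  have h01 : (i 0 : ℕ) < (i 1 : ℕ) := hmono (by decide)
  have h12 : (i 1 : ℕ) < (i 2 : ℕ) := hmono (by decide)
  have v01 : (π (i 0) : ℕ) < (π (i 1) : ℕ) := (hord 0 1).mpr (by decide)
  have v12 : (π (i 1) : ℕ) < (π (i 2) : ℕ) := (hord 1 2).mpr (by decide)
  have M01 : ∀ j : Fin n, (j : ℕ) < (i 0 : ℕ) → ¬((π (i 0) : ℕ) < (π j : ℕ) ∧ (π j : ℕ) < (π (i 1) : ℕ)) :=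
    fun j h1 h2 => hM 0 1 (by simp [S18]) ⟨j, by
      simp only [Nat.reduceAdd, posExt_zero, posExt_one, valExt1_one, valExt1_two]; omega⟩
  have M02 : ∀ j : Fin n, (j : ℕ) < (i 0 : ℕ) → ¬((π (i 1) : ℕ) < (π j : ℕ) ∧ (π j : ℕ) < (π (i 2) : ℕ)) :=
    fun j h1 h2 => hM 0 2 (by simp [S18]) ⟨j, by
      simp only [Nat.reduceAdd, posExt_zero, posExt_one, valExt1_two, valExt1_three]; omega⟩
  have M11 : ∀ j : Fin n, (i 0 : ℕ) < (j : ℕ) → (j : ℕ) < (i 1 : ℕ) → ¬((π (i 0) : ℕ) < (π j : ℕ) ∧ (π j : ℕ) < (π (i 1) : ℕ)) :=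
    fun j h1 h2 h3 => hM 1 1 (by simp [S18]) ⟨j, by
      simp only [Nat.reduceAdd, posExt_one, posExt_two, valExt1_one, valExt1_two]; omega⟩
  have M12 : ∀ j : Fin n, (i 0 : ℕ) < (j : ℕ) → (j : ℕ) < (i 1 : ℕ) → ¬((π (i 1) : ℕ) < (π j : ℕ) ∧ (π j : ℕ) < (π (i 2) : ℕ)) :=
    fun j h1 h2 h3 => hM 1 2 (by simp [S18]) ⟨j, by
      simp only [Nat.reduceAdd, posExt_one, posExt_two, valExt1_two, valExt1_three]; omega⟩
  have M22 : ∀ j : Fin n, (i 1 : ℕ) < (j : ℕ) → (j : ℕ) < (i 2 : ℕ) → ¬((π (i 1) : ℕ) < (π j : ℕ) ∧ (π j : ℕ) < (π (i 2) : ℕ)) :=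
    fun j h1 h2 h3 => hM 2 2 (by simp [S18]) ⟨j, by
      simp only [Nat.reduceAdd, posExt_two, posExt_three, valExt1_two, valExt1_three]; omega⟩
  have M30 : ∀ j : Fin n, (i 2 : ℕ) < (j : ℕ) → ¬((π j : ℕ) < (π (i 0) : ℕ)) :=
    fun j h1 h2 => hM 3 0 (by simp [S18]) ⟨j, by
      simp only [Nat.reduceAdd, posExt_three, posExt_four, valExt_zero, valExt1_one]; omega⟩
  have M31 : ∀ j : Fin n, (i 2 : ℕ) < (j : ℕ) → ¬((π (i 0) : ℕ) < (π j : ℕ) ∧ (π j : ℕ) < (π (i 1) : ℕ)) :=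
    fun j h1 h2 => hM 3 1 (by simp [S18]) ⟨j, by
      simp only [Nat.reduceAdd, posExt_three, posExt_four, valExt1_one, valExt1_two]; omega⟩
  have M32 : ∀ j : Fin n, (i 2 : ℕ) < (j : ℕ) → ¬((π (i 1) : ℕ) < (π j : ℕ) ∧ (π j : ℕ) < (π (i 2) : ℕ)) :=
    fun j h1 h2 => hM 3 2 (by simp [S18]) ⟨j, by
      simp only [Nat.reduceAdd, posExt_three, posExt_four, valExt1_two, valExt1_three]; omega⟩
  have M33 : ∀ j : Fin n, (i 2 : ℕ) < (j : ℕ) → ¬((π (i 2) : ℕ) < (π j : ℕ)) :=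
    fun j h1 h2 => hM 3 3 (by simp [S18]) ⟨j, by
      simp only [Nat.reduceAdd, posExt_three, posExt_four, valExt1_three, valExt_four]
      exact ⟨by omega, by omega, by omega, by omega⟩⟩
  -- Step 1 : i 2 is the last position
  have hlast : (i 2 : ℕ) + 1 = n := by
    by_contra hc
    have hn : (i 2 : ℕ) + 1 < n := by have := (i 2).isLt; omega
    set j : Fin n := ⟨(i 2 : ℕ) + 1, hn⟩ with hj
    have hvj : (j : ℕ) = (i 2 : ℕ) + 1 := rfl
    have hj2 : (i 2 : ℕ) < (j : ℕ) := by omega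
    have ne0 : (π j : ℕ) ≠ (π (i 0) : ℕ) := by
      intro e
      have e2 := congrArg Fin.val (π.injective (Fin.ext e)); omega
    have ne1 : (π j : ℕ) ≠ (π (i 1) : ℕ) := by
      intro e
      have e2 := congrArg Fin.val (π.injective (Fin.ext e)); omega
    have ne2 : (π j : ℕ) ≠ (π (i 2) : ℕ) := by
      intro e
      have e2 := congrArg Fin.val (π.injective (Fin.ext e)); omega
    have a0 := M30 j hj2
    have a1 := M31 j hj2
    have a2 := M32 j hj2
    have a3 := M33 j hj2
    omega
  -- Step 2 : value of i 1 is one less than value of i 2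
  have hval : (π (i 1) : ℕ) + 1 = (π (i 2) : ℕ) := by
    by_contra hc
    have hb : (π (i 1) : ℕ) + 1 < (π (i 2) : ℕ) := by omega
    have hxlt : (π (i 1) : ℕ) + 1 < n := by have := (π (i 2)).isLt; omega
    set x : Fin n := ⟨(π (i 1) : ℕ) + 1, by omega⟩ with hxdef
    set j : Fin n := π.symm x with hjdef
    have hx : (π j : ℕ) = (π (i 1) : ℕ) + 1 := by
      simp [hjdef, hxdef]
    have hne0 : (j : ℕ) ≠ (i 0 : ℕ) := by
      intro e
      have : j = i 0 := Fin.ext e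
      rw [this] at hx; omega
    have hne1 : (j : ℕ) ≠ (i 1 : ℕ) := by
      intro e
      have : j = i 1 := Fin.ext e
      rw [this] at hx; omega
    have hne2 : (j : ℕ) ≠ (i 2 : ℕ) := by
      intro e
      have : j = i 2 := Fin.ext e
      rw [this] at hx; omega
    have hjle : (j : ℕ) < n := j.isLt
    rcases Nat.lt_trichotomy (j : ℕ) (i 1 : ℕ) with hcase | hcase | hcase
    · rcases Nat.lt_trichotomy (j : ℕ) (i 0 : ℕ) with hc2 | hc2 | hc2
      · exact M02 j hc2 ⟨by omega, by omega⟩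
      · exact hne0 hc2
      · exact M12 j hc2 hcase ⟨by omega, by omega⟩
    · exact hne1 hcase
    · have : (j : ℕ) < (i 2 : ℕ) := by omega
      exact M22 j hcase this ⟨by omega, by omega⟩
  refine ⟨hlast, hval, h01, v01, ?_⟩
  intro j hj hjv
  by_contra hc
  have hgt : (π (i 0) : ℕ) < (π j : ℕ) := by omega
  have hne1 : (j : ℕ) ≠ (i 1 : ℕ) := by
    intro e
    have : j = i 1 := Fin.ext e
    rw [this] at hj; omega
  have hv1 : (π j : ℕ) < (π (i 1) : ℕ) := by
    rcases Nat.lt_trichotomy (π j : ℕ) (π (i 1) : ℕ) with h' | h' | h'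
    · exact h'
    · exact absurd (π.injective (Fin.ext h')) (fun e => hne1 (congrArg Fin.val e))
    · omega
  have hne0 : (j : ℕ) ≠ (i 0 : ℕ) := by
    intro e
    have : j = i 0 := Fin.ext e
    rw [this] at hgt; omega
  rcases Nat.lt_trichotomy (j : ℕ) (i 0 : ℕ) with hc2 | hc2 | hc2
  · exact M01 j hc2 ⟨hgt, hv1⟩
  · exact hne0 hc2
  · exact M11 j hc2 hj ⟨hgt, hv1⟩
lemma occ2_forward (π : Equiv.Perm (Fin n)) (i : Fin 3 → Fin n)
    (h : IsMeshOcc perm132 S18 π i) :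
    (i 2 : ℕ) + 1 = n ∧ (π (i 1) : ℕ) = (π (i 2) : ℕ) + 1 ∧ (i 0 : ℕ) < (i 1 : ℕ) ∧
    (π (i 0) : ℕ) < (π (i 2) : ℕ) ∧
    ∀ j : Fin n, (j : ℕ) < (i 1 : ℕ) → (π j : ℕ) < (π (i 2) : ℕ) →
      (π j : ℕ) ≤ (π (i 0) : ℕ) := by
  obtain ⟨hmono, hord, hM⟩ := h
  have h01 : (i 0 : ℕ) < (i 1 : ℕ) := hmono (by decide)
  have h12 : (i 1 : ℕ) < (i 2 : ℕ) := hmono (by decide)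
  have v02 : (π (i 0) : ℕ) < (π (i 2) : ℕ) := (hord 0 2).mpr (by decide)
  have v21 : (π (i 2) : ℕ) < (π (i 1) : ℕ) := (hord 2 1).mpr (by decide)
  have M01 : ∀ j : Fin n, (j : ℕ) < (i 0 : ℕ) → ¬((π (i 0) : ℕ) < (π j : ℕ) ∧ (π j : ℕ) < (π (i 2) : ℕ)) :=
    fun j h1 h2 => hM 0 1 (by simp [S18]) ⟨j, by
      simp only [Nat.reduceAdd, posExt_zero, posExt_one, valExt2_one, valExt2_two]; omega⟩
  have M02 : ∀ j : Fin n, (j : ℕ) < (i 0 : ℕ) → ¬((π (i 2) : ℕ) < (π j : ℕ) ∧ (π j : ℕ) < (π (i 1) : ℕ)) :=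
    fun j h1 h2 => hM 0 2 (by simp [S18]) ⟨j, by
      simp only [Nat.reduceAdd, posExt_zero, posExt_one, valExt2_two, valExt2_three]; omega⟩
  have M11 : ∀ j : Fin n, (i 0 : ℕ) < (j : ℕ) → (j : ℕ) < (i 1 : ℕ) → ¬((π (i 0) : ℕ) < (π j : ℕ) ∧ (π j : ℕ) < (π (i 2) : ℕ)) :=
    fun j h1 h2 h3 => hM 1 1 (by simp [S18]) ⟨j, by
      simp only [Nat.reduceAdd, posExt_one, posExt_two, valExt2_one, valExt2_two]; omega⟩
  have M12 : ∀ j : Fin n, (i 0 : ℕ) < (j : ℕ) → (j : ℕ) < (i 1 : ℕ) → ¬((π (i 2) : ℕ) < (π j : ℕ) ∧ (π j : ℕ) < (π (i 1) : ℕ)) :=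
    fun j h1 h2 h3 => hM 1 2 (by simp [S18]) ⟨j, by
      simp only [Nat.reduceAdd, posExt_one, posExt_two, valExt2_two, valExt2_three]; omega⟩
  have M22 : ∀ j : Fin n, (i 1 : ℕ) < (j : ℕ) → (j : ℕ) < (i 2 : ℕ) → ¬((π (i 2) : ℕ) < (π j : ℕ) ∧ (π j : ℕ) < (π (i 1) : ℕ)) :=
    fun j h1 h2 h3 => hM 2 2 (by simp [S18]) ⟨j, by
      simp only [Nat.reduceAdd, posExt_two, posExt_three, valExt2_two, valExt2_three]; omega⟩
  have M30 : ∀ j : Fin n, (i 2 : ℕ) < (j : ℕ) → ¬((π j : ℕ) < (π (i 0) : ℕ)) :=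
    fun j h1 h2 => hM 3 0 (by simp [S18]) ⟨j, by
      simp only [Nat.reduceAdd, posExt_three, posExt_four, valExt_zero, valExt2_one]; omega⟩
  have M31 : ∀ j : Fin n, (i 2 : ℕ) < (j : ℕ) → ¬((π (i 0) : ℕ) < (π j : ℕ) ∧ (π j : ℕ) < (π (i 2) : ℕ)) :=
    fun j h1 h2 => hM 3 1 (by simp [S18]) ⟨j, by
      simp only [Nat.reduceAdd, posExt_three, posExt_four, valExt2_one, valExt2_two]; omega⟩
  have M32 : ∀ j : Fin n, (i 2 : ℕ) < (j : ℕ) → ¬((π (i 2) : ℕ) < (π j : ℕ) ∧ (π j : ℕ) < (π (i 1) : ℕ)) :=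
    fun j h1 h2 => hM 3 2 (by simp [S18]) ⟨j, by
      simp only [Nat.reduceAdd, posExt_three, posExt_four, valExt2_two, valExt2_three]; omega⟩
  have M33 : ∀ j : Fin n, (i 2 : ℕ) < (j : ℕ) → ¬((π (i 1) : ℕ) < (π j : ℕ)) :=
    fun j h1 h2 => hM 3 3 (by simp [S18]) ⟨j, by
      simp only [Nat.reduceAdd, posExt_three, posExt_four, valExt2_three, valExt_four]
      exact ⟨by omega, by omega, by omega, by omega⟩⟩
  have hlast : (i 2 : ℕ) + 1 = n := by
    by_contra hc
    have hn : (i 2 : ℕ) + 1 < n := by have := (i 2).isLt; omega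
    set j : Fin n := ⟨(i 2 : ℕ) + 1, hn⟩ with hj
    have hvj : (j : ℕ) = (i 2 : ℕ) + 1 := rfl
    have hj2 : (i 2 : ℕ) < (j : ℕ) := by omega
    have ne0 : (π j : ℕ) ≠ (π (i 0) : ℕ) := by
      intro e
      have e2 := congrArg Fin.val (π.injective (Fin.ext e)); omega
    have ne1 : (π j : ℕ) ≠ (π (i 1) : ℕ) := by
      intro e
      have e2 := congrArg Fin.val (π.injective (Fin.ext e)); omega
    have ne2 : (π j : ℕ) ≠ (π (i 2) : ℕ) := by
      intro e
      have e2 := congrArg Fin.val (π.injective (Fin.ext e)); omega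
    have a0 := M30 j hj2
    have a1 := M31 j hj2
    have a2 := M32 j hj2
    have a3 := M33 j hj2
    omega
  have hval : (π (i 1) : ℕ) = (π (i 2) : ℕ) + 1 := by
    by_contra hc
    have hb : (π (i 2) : ℕ) + 1 < (π (i 1) : ℕ) := by omega
    set x : Fin n := ⟨(π (i 2) : ℕ) + 1, by have := (π (i 1)).isLt; omega⟩ with hxdef
    set j : Fin n := π.symm x with hjdef
    have hx : (π j : ℕ) = (π (i 2) : ℕ) + 1 := by
      simp [hjdef, hxdef]
    have hne0 : (j : ℕ) ≠ (i 0 : ℕ) := by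
      intro e
      have : j = i 0 := Fin.ext e
      rw [this] at hx; omega
    have hne1 : (j : ℕ) ≠ (i 1 : ℕ) := by
      intro e
      have : j = i 1 := Fin.ext e
      rw [this] at hx; omega
    have hne2 : (j : ℕ) ≠ (i 2 : ℕ) := by
      intro e
      have : j = i 2 := Fin.ext e
      rw [this] at hx; omega
    have hjle : (j : ℕ) < n := j.isLt
    rcases Nat.lt_trichotomy (j : ℕ) (i 1 : ℕ) with hcase | hcase | hcase
    · rcases Nat.lt_trichotomy (j : ℕ) (i 0 : ℕ) with hc2 | hc2 | hc2
      · exact M02 j hc2 ⟨by omega, by omega⟩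
      · exact hne0 hc2
      · exact M12 j hc2 hcase ⟨by omega, by omega⟩
    · exact hne1 hcase
    · have : (j : ℕ) < (i 2 : ℕ) := by omega
      exact M22 j hcase this ⟨by omega, by omega⟩
  refine ⟨hlast, hval, h01, v02, ?_⟩
  intro j hj hjv
  by_contra hc
  have hgt : (π (i 0) : ℕ) < (π j : ℕ) := by omega
  have hne2 : (π j : ℕ) ≠ (π (i 2) : ℕ) := by
    intro e
    have e2 := congrArg Fin.val (π.injective (Fin.ext e)); omega
  have hne0 : (j : ℕ) ≠ (i 0 : ℕ) := by
    intro e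
    have : j = i 0 := Fin.ext e
    rw [this] at hgt; omega
  rcases Nat.lt_trichotomy (j : ℕ) (i 0 : ℕ) with hc2 | hc2 | hc2
  · exact M01 j hc2 ⟨hgt, by omega⟩
  · exact hne0 hc2
  · exact M11 j hc2 hj ⟨hgt, by omega⟩
lemma occ1_unique (π : Equiv.Perm (Fin n)) (i i' : Fin 3 → Fin n)
    (h : IsMeshOcc perm123 S18 π i) (h' : IsMeshOcc perm123 S18 π i') : i = i' := by
  obtain ⟨l1, v1, a1, b1, m1⟩ := occ1_forward π i h
  obtain ⟨l2, v2, a2, b2, m2⟩ := occ1_forward π i' h'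
  have e2 : i 2 = i' 2 := Fin.ext (by omega)
  have ev2 : (π (i 2) : ℕ) = (π (i' 2) : ℕ) := by rw [e2]
  have e1 : i 1 = i' 1 := π.injective (Fin.ext (by omega))
  have ev1 : (i 1 : ℕ) = (i' 1 : ℕ) := congrArg Fin.val e1
  have q1 : (π (i' 0) : ℕ) ≤ (π (i 0) : ℕ) := by
    have hv1 : (π (i' 1) : ℕ) = (π (i 1) : ℕ) := by rw [e1]
    exact m1 (i' 0) (by omega) (by omega)
  have q2 : (π (i 0) : ℕ) ≤ (π (i' 0) : ℕ) := by
    have hv1 : (π (i' 1) : ℕ) = (π (i 1) : ℕ) := by rw [e1]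
    exact m2 (i 0) (by omega) (by omega)
  have e0 : i 0 = i' 0 := π.injective (Fin.ext (by omega))
  funext a
  fin_cases a
  · exact e0
  · exact e1
  · exact e2

lemma occ2_unique (π : Equiv.Perm (Fin n)) (i i' : Fin 3 → Fin n)
    (h : IsMeshOcc perm132 S18 π i) (h' : IsMeshOcc perm132 S18 π i') : i = i' := by
  obtain ⟨l1, v1, a1, b1, m1⟩ := occ2_forward π i h
  obtain ⟨l2, v2, a2, b2, m2⟩ := occ2_forward π i' h'
  have e2 : i 2 = i' 2 := Fin.ext (by omega)
  have ev2 : (π (i 2) : ℕ) = (π (i' 2) : ℕ) := by rw [e2]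
  have e1 : i 1 = i' 1 := π.injective (Fin.ext (by omega))
  have ev1 : (i 1 : ℕ) = (i' 1 : ℕ) := congrArg Fin.val e1
  have q1 : (π (i' 0) : ℕ) ≤ (π (i 0) : ℕ) := m1 (i' 0) (by omega) (by omega)
  have q2 : (π (i 0) : ℕ) ≤ (π (i' 0) : ℕ) := m2 (i 0) (by omega) (by omega)
  have e0 : i 0 = i' 0 := π.injective (Fin.ext (by omega))
  funext a
  fin_cases a
  · exact e0
  · exact e1
  · exact e2

lemma occ1_P1 (π : Equiv.Perm (Fin n)) (i : Fin 3 → Fin n)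
    (h : IsMeshOcc perm123 S18 π i) : P1 π := by
  obtain ⟨l1, v1, a1, b1, m1⟩ := occ1_forward π i h
  exact ⟨i 0, i 1, i 2, l1, v1, a1, b1⟩

lemma occ2_P2 (π : Equiv.Perm (Fin n)) (i : Fin 3 → Fin n)
    (h : IsMeshOcc perm132 S18 π i) : P2 π := by
  obtain ⟨l1, v1, a1, b1, m1⟩ := occ2_forward π i h
  exact ⟨i 0, i 1, i 2, l1, v1, a1, b1⟩
lemma occ1_exists (π : Equiv.Perm (Fin n)) (h : P1 π) :
    ∃ i : Fin 3 → Fin n, IsMeshOcc perm123 S18 π i := by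
  classical
  obtain ⟨j, k, l, hl, hv, hjk, hjv⟩ := h
  set T : Finset (Fin n) :=
    Finset.univ.filter (fun t => (t : ℕ) < (k : ℕ) ∧ (π t : ℕ) < (π k : ℕ)) with hT
  have hjT : j ∈ T := Finset.mem_filter.mpr ⟨Finset.mem_univ _, hjk, hjv⟩
  obtain ⟨j0, hj0T, hmax'⟩ := T.exists_max_image (fun t => (π t : ℕ)) ⟨j, hjT⟩
  have hj0k : (j0 : ℕ) < (k : ℕ) := (Finset.mem_filter.mp hj0T).2.1
  have hj0v : (π j0 : ℕ) < (π k : ℕ) := (Finset.mem_filter.mp hj0T).2.2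
  have hmax : ∀ t : Fin n, (t : ℕ) < (k : ℕ) → (π t : ℕ) < (π k : ℕ) →
      (π t : ℕ) ≤ (π j0 : ℕ) := fun t h1 h2 =>
    hmax' t (Finset.mem_filter.mpr ⟨Finset.mem_univ _, h1, h2⟩)
  have hkl : (k : ℕ) < (l : ℕ) := by
    have h1 : (k : ℕ) < n := k.isLt
    have h2 : (k : ℕ) ≠ (l : ℕ) := by
      intro e
      have : k = l := Fin.ext e
      rw [this] at hv; omega
    omega
  refine ⟨fun a => if (a : ℕ) = 0 then j0 else if (a : ℕ) = 1 then k else l, ?_, ?_, ?_⟩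
  · intro a b hab
    have hab' : (a : ℕ) < (b : ℕ) := hab
    have hbv := b.isLt
    simp only []
    split_ifs <;> simp only [Fin.lt_def] <;> omega
  · intro a b
    have hav := a.isLt
    have hbv := b.isLt
    simp only [perm123, Equiv.Perm.coe_one, id_eq, Fin.lt_def]
    split_ifs <;> omega
  · intro a b hab
    have hI0 : (fun a : Fin 3 => if (a : ℕ) = 0 then j0 else if (a : ℕ) = 1 then k else l) 0 = j0 := by
      norm_num
    have hI1 : (fun a : Fin 3 => if (a : ℕ) = 0 then j0 else if (a : ℕ) = 1 then k else l) 1 = k := by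
      norm_num
    have hI2 : (fun a : Fin 3 => if (a : ℕ) = 0 then j0 else if (a : ℕ) = 1 then k else l) 2 = l := by
      norm_num
    simp only [S18, Set.mem_insert_iff, Set.mem_singleton_iff, Prod.mk.injEq] at hab
    rcases hab with ⟨rfl, rfl⟩ | ⟨rfl, rfl⟩ | ⟨rfl, rfl⟩ | ⟨rfl, rfl⟩ | ⟨rfl, rfl⟩ |
      ⟨rfl, rfl⟩ | ⟨rfl, rfl⟩ | ⟨rfl, rfl⟩ | ⟨rfl, rfl⟩ <;>
      rintro ⟨x, hx1, hx2, hx3, hx4⟩ <;>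
      simp only [Nat.reduceAdd, posExt_zero, posExt_one, posExt_two, posExt_three,
        posExt_four, valExt_zero, valExt1_one, valExt1_two, valExt1_three, valExt_four,
        hI0, hI1, hI2] at hx1 hx2 hx3 hx4
    · have := hmax x (by omega) (by omega); omega
    · omega
    · have := hmax x (by omega) (by omega); omega
    · omega
    · omega
    · have := x.isLt; omega
    · have := x.isLt; omega
    · have := x.isLt; omega
    · have := x.isLt; omega
lemma occ2_exists (π : Equiv.Perm (Fin n)) (h : P2 π) :
    ∃ i : Fin 3 → Fin n, IsMeshOcc perm132 S18 π i := by
  classical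
  obtain ⟨j, k, l, hl, hv, hjk, hjv⟩ := h
  set T : Finset (Fin n) :=
    Finset.univ.filter (fun t => (t : ℕ) < (k : ℕ) ∧ (π t : ℕ) < (π l : ℕ)) with hT
  have hjT : j ∈ T := Finset.mem_filter.mpr ⟨Finset.mem_univ _, hjk, hjv⟩
  obtain ⟨j0, hj0T, hmax'⟩ := T.exists_max_image (fun t => (π t : ℕ)) ⟨j, hjT⟩
  have hj0k : (j0 : ℕ) < (k : ℕ) := (Finset.mem_filter.mp hj0T).2.1
  have hj0v : (π j0 : ℕ) < (π l : ℕ) := (Finset.mem_filter.mp hj0T).2.2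
  have hmax : ∀ t : Fin n, (t : ℕ) < (k : ℕ) → (π t : ℕ) < (π l : ℕ) →
      (π t : ℕ) ≤ (π j0 : ℕ) := fun t h1 h2 =>
    hmax' t (Finset.mem_filter.mpr ⟨Finset.mem_univ _, h1, h2⟩)
  have hkl : (k : ℕ) < (l : ℕ) := by
    have h1 : (k : ℕ) < n := k.isLt
    have h2 : (k : ℕ) ≠ (l : ℕ) := by
      intro e
      have : k = l := Fin.ext e
      rw [this] at hv; omega
    omega
  have hperm : ∀ a : Fin 3, ((perm132 a : Fin 3) : ℕ) =
      if (a : ℕ) = 1 then 2 else if (a : ℕ) = 2 then 1 else (a : ℕ) := by decide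
  refine ⟨fun a => if (a : ℕ) = 0 then j0 else if (a : ℕ) = 1 then k else l, ?_, ?_, ?_⟩
  · intro a b hab
    have hab' : (a : ℕ) < (b : ℕ) := hab
    have hbv := b.isLt
    simp only []
    split_ifs <;> simp only [Fin.lt_def] <;> omega
  · intro a b
    have hav := a.isLt
    have hbv := b.isLt
    simp only [Fin.lt_def, hperm]
    split_ifs <;> omega
  · intro a b hab
    have hI0 : (fun a : Fin 3 => if (a : ℕ) = 0 then j0 else if (a : ℕ) = 1 then k else l) 0 = j0 := by
      norm_num
    have hI1 : (fun a : Fin 3 => if (a : ℕ) = 0 then j0 else if (a : ℕ) = 1 then k else l) 1 = k := by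
      norm_num
    have hI2 : (fun a : Fin 3 => if (a : ℕ) = 0 then j0 else if (a : ℕ) = 1 then k else l) 2 = l := by
      norm_num
    simp only [S18, Set.mem_insert_iff, Set.mem_singleton_iff, Prod.mk.injEq] at hab
    rcases hab with ⟨rfl, rfl⟩ | ⟨rfl, rfl⟩ | ⟨rfl, rfl⟩ | ⟨rfl, rfl⟩ | ⟨rfl, rfl⟩ |
      ⟨rfl, rfl⟩ | ⟨rfl, rfl⟩ | ⟨rfl, rfl⟩ | ⟨rfl, rfl⟩ <;>
      rintro ⟨x, hx1, hx2, hx3, hx4⟩ <;>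
      simp only [Nat.reduceAdd, posExt_zero, posExt_one, posExt_two, posExt_three,
        posExt_four, valExt_zero, valExt2_one, valExt2_two, valExt2_three, valExt_four,
        hI0, hI1, hI2] at hx1 hx2 hx3 hx4
    · have := hmax x (by omega) (by omega); omega
    · omega
    · have := hmax x (by omega) (by omega); omega
    · omega
    · omega
    · have := x.isLt; omega
    · have := x.isLt; omega
    · have := x.isLt; omega
    · have := x.isLt; omega
lemma occ1_pos (π : Equiv.Perm (Fin n)) (h : P1 π) : occ perm123 S18 π = 1 := by
  obtain ⟨i, hi⟩ := occ1_exists π h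
  have hne : Nonempty {x : Fin 3 → Fin n // IsMeshOcc perm123 S18 π x} := ⟨⟨i, hi⟩⟩
  have hsub : Subsingleton {x : Fin 3 → Fin n // IsMeshOcc perm123 S18 π x} :=
    ⟨fun x y => Subtype.ext (occ1_unique π x.1 y.1 x.2 y.2)⟩
  simp only [occ]
  exact Nat.card_eq_one_iff_unique.mpr ⟨hsub, hne⟩

lemma occ1_zero (π : Equiv.Perm (Fin n)) (h : ¬ P1 π) : occ perm123 S18 π = 0 := by
  have : IsEmpty {x : Fin 3 → Fin n // IsMeshOcc perm123 S18 π x} :=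
    ⟨fun x => h (occ1_P1 π x.1 x.2)⟩
  simp only [occ]
  exact Nat.card_of_isEmpty

lemma occ2_pos (π : Equiv.Perm (Fin n)) (h : P2 π) : occ perm132 S18 π = 1 := by
  obtain ⟨i, hi⟩ := occ2_exists π h
  have hne : Nonempty {x : Fin 3 → Fin n // IsMeshOcc perm132 S18 π x} := ⟨⟨i, hi⟩⟩
  have hsub : Subsingleton {x : Fin 3 → Fin n // IsMeshOcc perm132 S18 π x} :=
    ⟨fun x y => Subtype.ext (occ2_unique π x.1 y.1 x.2 y.2)⟩
  simp only [occ]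
  exact Nat.card_eq_one_iff_unique.mpr ⟨hsub, hne⟩

lemma occ2_zero (π : Equiv.Perm (Fin n)) (h : ¬ P2 π) : occ perm132 S18 π = 0 := by
  have : IsEmpty {x : Fin 3 → Fin n // IsMeshOcc perm132 S18 π x} :=
    ⟨fun x => h (occ2_P2 π x.1 x.2)⟩
  simp only [occ]
  exact Nat.card_of_isEmpty
/-- Swap the last value `b` with `b - 1`. -/
def flipDown {n : ℕ} (π : Equiv.Perm (Fin n)) : Equiv.Perm (Fin n) :=
  if h : 0 < n then
    π.trans (Equiv.swap (π ⟨n - 1, by omega⟩)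
      ⟨(π ⟨n - 1, by omega⟩ : ℕ) - 1, by have := (π ⟨n - 1, by omega⟩).isLt; omega⟩)
  else π

/-- Swap the last value `b` with `b + 1`. -/
def flipUp {n : ℕ} (π : Equiv.Perm (Fin n)) : Equiv.Perm (Fin n) :=
  if h : 0 < n then
    π.trans (Equiv.swap (π ⟨n - 1, by omega⟩)
      ⟨min ((π ⟨n - 1, by omega⟩ : ℕ) + 1) (n - 1), by omega⟩)
  else π

lemma P2_flipDown (π : Equiv.Perm (Fin n)) (h : P1 π) : P2 (flipDown π) := by
  obtain ⟨j, k, l, hl, hv, hjk, hjv⟩ := h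
  have hn : 0 < n := by omega
  have hL : (⟨n - 1, by omega⟩ : Fin n) = l := Fin.ext (by simp; omega)
  have hb := (π l).isLt
  have hkval : π k = (⟨(π l : ℕ) - 1, by omega⟩ : Fin n) := Fin.ext (by simp; omega)
  rw [flipDown, dif_pos hn]
  simp only [hL]
  set c : Fin n := ⟨(π l : ℕ) - 1, by omega⟩ with hc
  refine ⟨j, k, l, hl, ?_, hjk, ?_⟩
  · have e1 : (π.trans (Equiv.swap (π l) c)) k = π l := by
      simp [Equiv.trans_apply, hkval, Equiv.swap_apply_right]
    have e2 : (π.trans (Equiv.swap (π l) c)) l = c := by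
      simp [Equiv.trans_apply, Equiv.swap_apply_left]
    rw [e1, e2]
    simp [hc]; omega
  · have hne1 : π j ≠ π l := by
      intro e; have := congrArg Fin.val e; omega
    have hne2 : π j ≠ c := by
      intro e; have := congrArg Fin.val e; simp [hc] at this; omega
    have e1 : (π.trans (Equiv.swap (π l) c)) j = π j := by
      simp [Equiv.trans_apply, Equiv.swap_apply_of_ne_of_ne hne1 hne2]
    have e2 : (π.trans (Equiv.swap (π l) c)) l = c := by
      simp [Equiv.trans_apply, Equiv.swap_apply_left]
    rw [e1, e2]
    simp [hc]; omega

lemma P1_flipUp (π : Equiv.Perm (Fin n)) (h : P2 π) : P1 (flipUp π) := by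
  obtain ⟨j, k, l, hl, hv, hjk, hjv⟩ := h
  have hn : 0 < n := by omega
  have hL : (⟨n - 1, by omega⟩ : Fin n) = l := Fin.ext (by simp; omega)
  have hb := (π l).isLt
  have hkb := (π k).isLt
  have hkval : π k = (⟨min ((π l : ℕ) + 1) (n - 1), by omega⟩ : Fin n) :=
    Fin.ext (by simp; omega)
  rw [flipUp, dif_pos hn]
  simp only [hL]
  set c : Fin n := ⟨min ((π l : ℕ) + 1) (n - 1), by omega⟩ with hc
  have hcval : (c : ℕ) = (π l : ℕ) + 1 := by simp [hc]; omega
  refine ⟨j, k, l, hl, ?_, hjk, ?_⟩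
  · have e1 : (π.trans (Equiv.swap (π l) c)) k = π l := by
      simp [Equiv.trans_apply, hkval, Equiv.swap_apply_right]
    have e2 : (π.trans (Equiv.swap (π l) c)) l = c := by
      simp [Equiv.trans_apply, Equiv.swap_apply_left]
    rw [e1, e2]
    omega
  · have hne1 : π j ≠ π l := by
      intro e; have := congrArg Fin.val e; omega
    have hne2 : π j ≠ c := by
      intro e; have := congrArg Fin.val e; omega
    have e1 : (π.trans (Equiv.swap (π l) c)) j = π j := by
      simp [Equiv.trans_apply, Equiv.swap_apply_of_ne_of_ne hne1 hne2]
    have e2 : (π.trans (Equiv.swap (π l) c)) k = π l := by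
      simp [Equiv.trans_apply, hkval, Equiv.swap_apply_right]
    rw [e1, e2]
    omega

lemma flipUp_flipDown (π : Equiv.Perm (Fin n)) (h : P1 π) : flipUp (flipDown π) = π := by
  obtain ⟨j, k, l, hl, hv, hjk, hjv⟩ := h
  have hn : 0 < n := by omega
  have hL : (⟨n - 1, by omega⟩ : Fin n) = l := Fin.ext (by simp; omega)
  have hb := (π l).isLt
  rw [flipDown, dif_pos hn]
  simp only [hL]
  set c : Fin n := ⟨(π l : ℕ) - 1, by omega⟩ with hc
  set π' := π.trans (Equiv.swap (π l) c) with hπ'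
  have e2 : π' l = c := by simp [hπ', Equiv.trans_apply, Equiv.swap_apply_left]
  rw [flipUp, dif_pos hn]
  simp only [hL, e2]
  have hcc : (⟨min ((c : ℕ) + 1) (n - 1), by omega⟩ : Fin n) = π l := by
    apply Fin.ext; simp [hc]; omega
  rw [hcc]
  apply Equiv.ext
  intro x
  simp [hπ', Equiv.trans_apply, Equiv.swap_comm (π l) c]

lemma flipDown_flipUp (π : Equiv.Perm (Fin n)) (h : P2 π) : flipDown (flipUp π) = π := by
  obtain ⟨j, k, l, hl, hv, hjk, hjv⟩ := h
  have hn : 0 < n := by omega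
  have hL : (⟨n - 1, by omega⟩ : Fin n) = l := Fin.ext (by simp; omega)
  have hb := (π l).isLt
  have hkb := (π k).isLt
  rw [flipUp, dif_pos hn]
  simp only [hL]
  set c : Fin n := ⟨min ((π l : ℕ) + 1) (n - 1), by omega⟩ with hc
  have hcval : (c : ℕ) = (π l : ℕ) + 1 := by simp [hc]; omega
  set π' := π.trans (Equiv.swap (π l) c) with hπ'
  have e2 : π' l = c := by simp [hπ', Equiv.trans_apply, Equiv.swap_apply_left]
  rw [flipDown, dif_pos hn]
  simp only [hL, e2]
  have hcc : (⟨(c : ℕ) - 1, by omega⟩ : Fin n) = π l := by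
    apply Fin.ext; simp; omega
  rw [hcc]
  apply Equiv.ext
  intro x
  simp [hπ', Equiv.trans_apply, Equiv.swap_comm (π l) c]
/-- The bijection between permutations satisfying `P1` and those satisfying `P2`. -/
def flipEquiv (n : ℕ) : {π : Equiv.Perm (Fin n) // P1 π} ≃ {π : Equiv.Perm (Fin n) // P2 π} where
  toFun x := ⟨flipDown x.1, P2_flipDown x.1 x.2⟩
  invFun x := ⟨flipUp x.1, P1_flipUp x.1 x.2⟩
  left_inv x := Subtype.ext (flipUp_flipDown x.1 x.2)
  right_inv x := Subtype.ext (flipDown_flipUp x.1 x.2)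

open Classical in
lemma card_key (n : ℕ) :
    Nat.card {π : Equiv.Perm (Fin n) // P1 π ∧ ¬ P2 π} =
    Nat.card {π : Equiv.Perm (Fin n) // P2 π ∧ ¬ P1 π} := by
  rw [Nat.card_eq_fintype_card, Nat.card_eq_fintype_card]
  rw [Fintype.card_subtype, Fintype.card_subtype]
  have key : Fintype.card {π : Equiv.Perm (Fin n) // P1 π} =
      Fintype.card {π : Equiv.Perm (Fin n) // P2 π} := Fintype.card_congr (flipEquiv n)
  rw [Fintype.card_subtype, Fintype.card_subtype] at key
  have A := Finset.card_filter_add_card_filter_not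
    (s := (Finset.univ : Finset (Equiv.Perm (Fin n))).filter (fun π => P1 π)) (p := fun π => P2 π)
  have B := Finset.card_filter_add_card_filter_not
    (s := (Finset.univ : Finset (Equiv.Perm (Fin n))).filter (fun π => P2 π)) (p := fun π => P1 π)
  rw [Finset.filter_filter, Finset.filter_filter] at A B
  have C : (Finset.univ : Finset (Equiv.Perm (Fin n))).filter (fun π => P2 π ∧ P1 π) =
      (Finset.univ : Finset (Equiv.Perm (Fin n))).filter (fun π => P1 π ∧ P2 π) :=
    Finset.filter_congr (fun x _ => by constructor <;> exact fun h => ⟨h.2, h.1⟩)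
  rw [C] at B
  omega

lemma main18 (n k ℓ : ℕ) :
    Nat.card {π : Equiv.Perm (Fin n) // occ perm123 S18 π = k ∧ occ perm132 S18 π = ℓ} =
    Nat.card {π : Equiv.Perm (Fin n) // occ perm123 S18 π = ℓ ∧ occ perm132 S18 π = k} := by
  classical
  by_cases hkl : k = ℓ
  · subst hkl; rfl
  have i1 : ∀ π : Equiv.Perm (Fin n), ∀ m : ℕ,
      occ perm123 S18 π = m ↔ ((P1 π ∧ m = 1) ∨ (¬ P1 π ∧ m = 0)) := by
    intro π m
    by_cases h : P1 π
    · rw [occ1_pos π h]; constructor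
      · intro e; exact Or.inl ⟨h, e.symm⟩
      · rintro (⟨_, e⟩ | ⟨hc, _⟩); · omega
        · exact absurd h hc
    · rw [occ1_zero π h]; constructor
      · intro e; exact Or.inr ⟨h, e.symm⟩
      · rintro (⟨hc, _⟩ | ⟨_, e⟩); · exact absurd hc h
        · omega
  have i2 : ∀ π : Equiv.Perm (Fin n), ∀ m : ℕ,
      occ perm132 S18 π = m ↔ ((P2 π ∧ m = 1) ∨ (¬ P2 π ∧ m = 0)) := by
    intro π m
    by_cases h : P2 π
    · rw [occ2_pos π h]; constructor
      · intro e; exact Or.inl ⟨h, e.symm⟩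
      · rintro (⟨_, e⟩ | ⟨hc, _⟩); · omega
        · exact absurd h hc
    · rw [occ2_zero π h]; constructor
      · intro e; exact Or.inr ⟨h, e.symm⟩
      · rintro (⟨hc, _⟩ | ⟨_, e⟩); · exact absurd hc h
        · omega
  by_cases hk1 : k ≤ 1 ∧ ℓ ≤ 1
  · -- then {k, ℓ} = {0, 1}
    have : (k = 1 ∧ ℓ = 0) ∨ (k = 0 ∧ ℓ = 1) := by omega
    rcases this with ⟨rfl, rfl⟩ | ⟨rfl, rfl⟩
    · have e1 : ∀ π : Equiv.Perm (Fin n),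
          (occ perm123 S18 π = 1 ∧ occ perm132 S18 π = 0) ↔ (P1 π ∧ ¬ P2 π) := by
        intro π
        rw [i1 π 1, i2 π 0]
        constructor
        · rintro ⟨h1 | h1, h2 | h2⟩ <;> first | exact ⟨h1.1, h2.1⟩ | omega
        · rintro ⟨h1, h2⟩; exact ⟨Or.inl ⟨h1, rfl⟩, Or.inr ⟨h2, rfl⟩⟩
      have e2 : ∀ π : Equiv.Perm (Fin n),
          (occ perm123 S18 π = 0 ∧ occ perm132 S18 π = 1) ↔ (P2 π ∧ ¬ P1 π) := by
        intro π
        rw [i1 π 0, i2 π 1]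
        constructor
        · rintro ⟨h1 | h1, h2 | h2⟩ <;> first | exact ⟨h2.1, h1.1⟩ | omega
        · rintro ⟨h1, h2⟩; exact ⟨Or.inr ⟨h2, rfl⟩, Or.inl ⟨h1, rfl⟩⟩
      rw [Nat.card_congr (Equiv.subtypeEquivRight e1), Nat.card_congr (Equiv.subtypeEquivRight e2)]
      exact card_key n
    · have e1 : ∀ π : Equiv.Perm (Fin n),
          (occ perm123 S18 π = 0 ∧ occ perm132 S18 π = 1) ↔ (P2 π ∧ ¬ P1 π) := by
        intro π
        rw [i1 π 0, i2 π 1]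
        constructor
        · rintro ⟨h1 | h1, h2 | h2⟩ <;> first | exact ⟨h2.1, h1.1⟩ | omega
        · rintro ⟨h1, h2⟩; exact ⟨Or.inr ⟨h2, rfl⟩, Or.inl ⟨h1, rfl⟩⟩
      have e2 : ∀ π : Equiv.Perm (Fin n),
          (occ perm123 S18 π = 1 ∧ occ perm132 S18 π = 0) ↔ (P1 π ∧ ¬ P2 π) := by
        intro π
        rw [i1 π 1, i2 π 0]
        constructor
        · rintro ⟨h1 | h1, h2 | h2⟩ <;> first | exact ⟨h1.1, h2.1⟩ | omega
        · rintro ⟨h1, h2⟩; exact ⟨Or.inl ⟨h1, rfl⟩, Or.inr ⟨h2, rfl⟩⟩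
      rw [Nat.card_congr (Equiv.subtypeEquivRight e1), Nat.card_congr (Equiv.subtypeEquivRight e2)]
      exact (card_key n).symm
  · -- one of k, ℓ is ≥ 2 : both sides are empty
    have h2 : 2 ≤ k ∨ 2 ≤ ℓ := by omega
    have empty1 : IsEmpty {π : Equiv.Perm (Fin n) //
        occ perm123 S18 π = k ∧ occ perm132 S18 π = ℓ} := by
      constructor; rintro ⟨π, h1', h2'⟩
      rw [i1 π k] at h1'; rw [i2 π ℓ] at h2'
      rcases h1' with h1' | h1' <;> rcases h2' with h2' | h2' <;> omega
    have empty2 : IsEmpty {π : Equiv.Perm (Fin n) //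
        occ perm123 S18 π = ℓ ∧ occ perm132 S18 π = k} := by
      constructor; rintro ⟨π, h1', h2'⟩
      rw [i1 π ℓ] at h1'; rw [i2 π k] at h2'
      rcases h1' with h1' | h1' <;> rcases h2' with h2' | h2' <;> omega
    rw [Nat.card_of_isEmpty, Nat.card_of_isEmpty]

theorem statement_18 :
    JointlyEquidistributed perm123 ({(0, 1), (0, 2), (1, 1), (1, 2), (2, 2), (3, 0), (3, 1), (3, 2), (3, 3)} : Set (ℕ × ℕ))
      perm132 ({(0, 1), (0, 2), (1, 1), (1, 2), (2, 2), (3, 0), (3, 1), (3, 2), (3, 3)} : Set (ℕ × ℕ)) := by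
  intro n k ℓ
  exact main18 n k ℓ
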